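/- For every 0 ≤ t < n and every safe history h of length t+1, er(h, π) = r(h) + ∑_{s ∈ C} T (h t) (π h) s · er(h⌢s, π), where h⌢s denotes the history of length t+2 obtained by appending the state s to h. -/
import Mathlib


open Finset
open scoped Classical

noncomputable section

/-- The restriction of a trajectory `τ : Fin (n+1) → S` to its first `t+1` entries. -/
def pre {S : Type*} {n : ℕ} (τ : Fin (n + 1) → S) (t : ℕ) (ht : t + 1 ≤ n + 1) :
    Fin (t + 1) → S :=
  fun i => τ (Fin.castLE ht i)

/-- The immediate risk of a history `h` of length `t+1`. -/
def risk {S A : Type*} [Fintype S] (T : S → A → S → ℝ) (C : Set S)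
    (π : (t : ℕ) → (Fin (t + 1) → S) → A) {t : ℕ} (h : Fin (t + 1) → S) : ℝ :=
  ∑ s' ∈ univ.filter (fun s' => s' ∉ C), T (h (Fin.last t)) (π t h) s'

/-- The conditional probability of trajectory `τ` from step `t` on:
`p_t(τ) = ∏_{i=t}^{n-1} T (τ i) (π (prefix_i τ)) (τ (i+1))`. -/
def probFrom {S A : Type*} {n : ℕ} (T : S → A → S → ℝ)
    (π : (t : ℕ) → (Fin (t + 1) → S) → A) (t : ℕ) (τ : Fin (n + 1) → S) : ℝ :=
  ∏ i ∈ univ.filter (fun i : Fin n => t ≤ (i : ℕ)),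
    T (τ i.castSucc) (π i (pre τ i (Nat.succ_le_succ i.isLt.le))) (τ i.succ)

/-- The execution risk of the policy `π` after the safe history `h` of length `t+1`:
one minus the conditional probability of the safe trajectories extending `h`. -/
def erHist {S A : Type*} [Fintype S] (n : ℕ) (T : S → A → S → ℝ) (C : Set S)
    (π : (t : ℕ) → (Fin (t + 1) → S) → A) {t : ℕ} (ht : t + 1 ≤ n + 1)
    (h : Fin (t + 1) → S) : ℝ :=
  1 - ∑ τ ∈ univ.filter (fun τ : Fin (n + 1) → S =>
        (∀ i, τ i ∈ C) ∧ pre τ t ht = h), probFrom T π t τ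

lemma prob_split {S A : Type*} {n : ℕ} (T : S → A → S → ℝ)
    (π : (t : ℕ) → (Fin (t + 1) → S) → A) (t : ℕ) (ht : t < n)
    (τ : Fin (n + 1) → S) :
    probFrom T π t τ
      = T (τ ⟨t, ht.trans_le n.le_succ⟩) (π t (pre τ t (Nat.succ_le_succ ht.le)))
          (τ ⟨t + 1, Nat.succ_lt_succ ht⟩) * probFrom T π (t + 1) τ := by
  unfold probFrom
  have hset : (univ.filter (fun i : Fin n => t ≤ (i : ℕ)))
      = insert ⟨t, ht⟩ (univ.filter (fun i : Fin n => t + 1 ≤ (i : ℕ))) := by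
    ext i
    simp [Fin.ext_iff]
    omega
  rw [hset, Finset.prod_insert (by simp)]
  rfl

lemma pre_snoc_iff {S : Type*} {n t : ℕ} (ht : t < n) (τ : Fin (n+1) → S)
    (h : Fin (t+1) → S) (s : S) :
    pre τ (t+1) (Nat.succ_le_succ ht) = Fin.snoc h s
      ↔ pre τ t (Nat.succ_le_succ ht.le) = h ∧ τ ⟨t+1, Nat.succ_lt_succ ht⟩ = s := by
  constructor
  · intro he
    refine ⟨funext fun i => ?_, ?_⟩
    · have := congrFun he i.castSucc
      rw [Fin.snoc_castSucc] at this
      simpa [pre, Fin.castLE, Fin.castSucc, Fin.castAdd, Fin.castLT] using this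
    · have := congrFun he (Fin.last (t+1))
      rw [Fin.snoc_last] at this
      simpa [pre, Fin.last, Fin.castLE] using this
  · rintro ⟨h1, h2⟩
    funext i
    induction i using Fin.lastCases with
    | last =>
      rw [Fin.snoc_last]
      simpa [pre, Fin.last, Fin.castLE] using h2
    | cast i =>
      rw [Fin.snoc_castSucc]
      have := congrFun h1 i
      simpa [pre, Fin.castLE, Fin.castSucc, Fin.castAdd, Fin.castLT] using this

/-- The recursive expression for the execution risk used in the proof of Lemma 2 of the
paper: `er(h,π) = r(h) + ∑_{s ∈ C} T (h t) (π h) s · er(h⌢s, π)`. -/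
theorem er_recursion
    {S A : Type*} [Fintype S] [Nonempty S] [Fintype A] [Nonempty A]
    (n : ℕ) (hn : 1 ≤ n)
    (C : Set S) (s₀ : S) (hs₀ : s₀ ∈ C)
    (T : S → A → S → ℝ)
    (hT0 : ∀ s a s', 0 ≤ T s a s')
    (hT1 : ∀ s a, ∑ s', T s a s' = 1)
    (π : (t : ℕ) → (Fin (t + 1) → S) → A)
    (t : ℕ) (ht : t < n)
    (h : Fin (t + 1) → S) (hh0 : h 0 = s₀) (hhsafe : ∀ i, h i ∈ C) :
    erHist n T C π (Nat.succ_le_succ ht.le) h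
      = risk T C π h
        + ∑ s ∈ univ.filter (fun s => s ∈ C),
            T (h (Fin.last t)) (π t h) s
              * erHist n T C π (Nat.succ_le_succ ht) (Fin.snoc h s) := by
  have key : (∑ τ ∈ univ.filter (fun τ : Fin (n + 1) → S =>
          (∀ i, τ i ∈ C) ∧ pre τ t (Nat.succ_le_succ ht.le) = h), probFrom T π t τ)
      = ∑ s ∈ univ.filter (fun s => s ∈ C),
          T (h (Fin.last t)) (π t h) s *
            ∑ τ ∈ univ.filter (fun τ : Fin (n + 1) → S =>
              (∀ i, τ i ∈ C) ∧ pre τ (t+1) (Nat.succ_le_succ ht) = Fin.snoc h s),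
              probFrom T π (t+1) τ := by
    have step1 := Finset.sum_fiberwise_of_maps_to
        (s := univ.filter (fun τ : Fin (n + 1) → S =>
          (∀ i, τ i ∈ C) ∧ pre τ t (Nat.succ_le_succ ht.le) = h))
        (t := (univ : Finset S))
        (g := fun τ => τ ⟨t+1, Nat.succ_lt_succ ht⟩)
        (fun τ _ => mem_univ _) (probFrom T π t)
    rw [← step1]
    have hterm : ∀ s : S,
        (∑ τ ∈ (univ.filter (fun τ : Fin (n + 1) → S =>
            (∀ i, τ i ∈ C) ∧ pre τ t (Nat.succ_le_succ ht.le) = h)).filter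
            (fun τ => τ ⟨t+1, Nat.succ_lt_succ ht⟩ = s), probFrom T π t τ)
        = T (h (Fin.last t)) (π t h) s *
            ∑ τ ∈ univ.filter (fun τ : Fin (n + 1) → S =>
              (∀ i, τ i ∈ C) ∧ pre τ (t+1) (Nat.succ_le_succ ht) = Fin.snoc h s),
              probFrom T π (t+1) τ := by
      intro s
      have hBs : (univ.filter (fun τ : Fin (n + 1) → S =>
            (∀ i, τ i ∈ C) ∧ pre τ t (Nat.succ_le_succ ht.le) = h)).filter
            (fun τ => τ ⟨t+1, Nat.succ_lt_succ ht⟩ = s)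
          = univ.filter (fun τ : Fin (n + 1) → S =>
              (∀ i, τ i ∈ C) ∧ pre τ (t+1) (Nat.succ_le_succ ht) = Fin.snoc h s) := by
        rw [Finset.filter_filter]
        apply Finset.filter_congr
        intro τ _
        rw [pre_snoc_iff ht]
        tauto
      rw [hBs, Finset.mul_sum]
      apply Finset.sum_congr rfl
      intro τ hτ
      simp only [mem_filter, mem_univ, true_and] at hτ
      obtain ⟨hsafe, hpre⟩ := hτ
      obtain ⟨hpret, hts⟩ := (pre_snoc_iff ht τ h s).mp hpre
      rw [prob_split T π t ht τ, hpret, hts]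
      have hx : τ (⟨t, ht.trans_le n.le_succ⟩ : Fin (n+1)) = h (Fin.last t) :=
        congrFun hpret (Fin.last t)
      rw [hx]
    rw [Finset.sum_congr rfl (fun s _ => hterm s)]
    symm
    apply Finset.sum_subset (Finset.filter_subset _ _)
    intro s _ hsC
    simp only [mem_filter, mem_univ, true_and] at hsC
    have hempty : (univ.filter (fun τ : Fin (n + 1) → S =>
        (∀ i, τ i ∈ C) ∧ pre τ (t+1) (Nat.succ_le_succ ht) = Fin.snoc h s)) = ∅ := by
      apply Finset.filter_false_of_mem
      rintro τ _ ⟨hsafe, hpre⟩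
      exact hsC (((pre_snoc_iff ht τ h s).mp hpre).2 ▸ hsafe ⟨t+1, Nat.succ_lt_succ ht⟩)
    rw [hempty, Finset.sum_empty, mul_zero]
  have hone : risk T C π h + ∑ s ∈ univ.filter (fun s => s ∈ C),
      T (h (Fin.last t)) (π t h) s = 1 := by
    unfold risk
    rw [add_comm, Finset.sum_filter_add_sum_filter_not]
    exact hT1 _ _
  unfold erHist
  rw [key]
  have expand : ∑ s ∈ univ.filter (fun s => s ∈ C),
      T (h (Fin.last t)) (π t h) s *
        (1 - ∑ τ ∈ univ.filter (fun τ : Fin (n + 1) → S =>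
          (∀ i, τ i ∈ C) ∧ pre τ (t+1) (Nat.succ_le_succ ht) = Fin.snoc h s),
          probFrom T π (t+1) τ)
      = (∑ s ∈ univ.filter (fun s => s ∈ C), T (h (Fin.last t)) (π t h) s)
        - ∑ s ∈ univ.filter (fun s => s ∈ C),
            T (h (Fin.last t)) (π t h) s *
              ∑ τ ∈ univ.filter (fun τ : Fin (n + 1) → S =>
                (∀ i, τ i ∈ C) ∧ pre τ (t+1) (Nat.succ_le_succ ht) = Fin.snoc h s),
                probFrom T π (t+1) τ := by
    rw [← Finset.sum_sub_distrib]
    exact Finset.sum_congr rfl fun s _ => by ring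
  rw [expand]
  linarith
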